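/- Let f₁, f₂, g₁, g₂ : [0,∞) → [0,∞) be continuous, nondecreasing functions that are strictly positive on (0,∞), let c₁ > 0, c₂ > 0, and suppose ∫_{c₁}^{∞} dw / g₁(w) < ∞. Then the system w'(t) = f₁(z(t))·g₁(w(t)), z'(t) = f₂(z(t))·g₂(w(t)) with w(0) = c₁, z(0) = c₂ has no global solution: there is no pair of differentiable functions w, z : [0,∞) → [0,∞) satisfying these equations for all t ≥ 0. -/

import Mathlib

open Set MeasureTheory Filter

private lemma nonneg_of_pos_Ioi' (f : ℝ → ℝ) (hc : ContinuousOn f (Ici (0:ℝ)))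
    (hp : ∀ s ∈ Ioi (0:ℝ), 0 < f s) : ∀ s ∈ Ici (0:ℝ), 0 ≤ f s := by
  intro s hs
  rcases eq_or_lt_of_le (Set.mem_Ici.mp hs) with h | h
  · have h0 : Tendsto f (nhdsWithin 0 (Ioi (0:ℝ))) (nhds (f 0)) :=
      (hc 0 Set.self_mem_Ici).mono_left (nhdsWithin_mono _ Ioi_subset_Ici_self)
    have := ge_of_tendsto h0 (eventually_nhdsWithin_of_forall fun x hx => (hp x hx).le)
    simpa [← h] using this
  · exact (hp s h).le

/-- Theorem A, part (1), of the paper: for the separated-variables system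
`w' = f₁(z) g₁(w)`, `z' = f₂(z) g₂(w)` with positive initial data, the condition
`∫_{c₁}^∞ dw / g₁(w) < ∞` rules out global solutions (the solution blows up in
finite time). -/
theorem no_global_solution_separated_variables
    (f₁ f₂ g₁ g₂ : ℝ → ℝ) (c₁ c₂ : ℝ)
    (hf₁_cont : ContinuousOn f₁ (Ici (0 : ℝ))) (hf₂_cont : ContinuousOn f₂ (Ici (0 : ℝ)))
    (hg₁_cont : ContinuousOn g₁ (Ici (0 : ℝ))) (hg₂_cont : ContinuousOn g₂ (Ici (0 : ℝ)))
    (hf₁_mono : MonotoneOn f₁ (Ici (0 : ℝ))) (hf₂_mono : MonotoneOn f₂ (Ici (0 : ℝ)))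
    (hg₁_mono : MonotoneOn g₁ (Ici (0 : ℝ))) (hg₂_mono : MonotoneOn g₂ (Ici (0 : ℝ)))
    (hf₁_pos : ∀ s ∈ Ioi (0 : ℝ), 0 < f₁ s) (hf₂_pos : ∀ s ∈ Ioi (0 : ℝ), 0 < f₂ s)
    (hg₁_pos : ∀ s ∈ Ioi (0 : ℝ), 0 < g₁ s) (hg₂_pos : ∀ s ∈ Ioi (0 : ℝ), 0 < g₂ s)
    (hc₁ : 0 < c₁) (hc₂ : 0 < c₂)
    (hint : IntegrableOn (fun s => 1 / g₁ s) (Ici c₁)) :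
    ¬ ∃ w z : ℝ → ℝ,
        (∀ t : ℝ, 0 ≤ t → 0 ≤ w t ∧ 0 ≤ z t) ∧
        w 0 = c₁ ∧ z 0 = c₂ ∧
        (∀ t : ℝ, 0 ≤ t →
          HasDerivAt w (f₁ (z t) * g₁ (w t)) t ∧
          HasDerivAt z (f₂ (z t) * g₂ (w t)) t) := by
  rintro ⟨w, z, hnn, hw0, hz0, hderiv⟩
  have hf₁0 := nonneg_of_pos_Ioi' f₁ hf₁_cont hf₁_pos
  have hf₂0 := nonneg_of_pos_Ioi' f₂ hf₂_cont hf₂_pos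
  have hg₁0 := nonneg_of_pos_Ioi' g₁ hg₁_cont hg₁_pos
  have hg₂0 := nonneg_of_pos_Ioi' g₂ hg₂_cont hg₂_pos
  -- monotonicity of w and z on [0, ∞)
  have hmonow : MonotoneOn w (Ici (0:ℝ)) := by
    apply monotoneOn_of_deriv_nonneg (convex_Ici 0)
    · exact fun t ht => ((hderiv t ht).1.continuousAt).continuousWithinAt
    · intro t ht
      rw [interior_Ici] at ht
      exact ((hderiv t ht.le).1.differentiableAt).differentiableWithinAt
    · intro t ht
      rw [interior_Ici] at ht
      rw [(hderiv t ht.le).1.deriv]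
      exact mul_nonneg (hf₁0 _ (hnn t ht.le).2) (hg₁0 _ (hnn t ht.le).1)
  have hmonoz : MonotoneOn z (Ici (0:ℝ)) := by
    apply monotoneOn_of_deriv_nonneg (convex_Ici 0)
    · exact fun t ht => ((hderiv t ht).2.continuousAt).continuousWithinAt
    · intro t ht
      rw [interior_Ici] at ht
      exact ((hderiv t ht.le).2.differentiableAt).differentiableWithinAt
    · intro t ht
      rw [interior_Ici] at ht
      rw [(hderiv t ht.le).2.deriv]
      exact mul_nonneg (hf₂0 _ (hnn t ht.le).2) (hg₂0 _ (hnn t ht.le).1)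
  have hwge : ∀ t : ℝ, 0 ≤ t → c₁ ≤ w t := fun t ht => hw0 ▸ hmonow (Set.mem_Ici.mpr le_rfl) (Set.mem_Ici.mpr ht) ht
  have hzge : ∀ t : ℝ, 0 ≤ t → c₂ ≤ z t := fun t ht => hz0 ▸ hmonoz (Set.mem_Ici.mpr le_rfl) (Set.mem_Ici.mpr ht) ht
  set a : ℝ := f₁ c₂ with ha_def
  have ha : 0 < a := hf₁_pos c₂ hc₂
  -- the antiderivative G
  set G : ℝ → ℝ := fun x => ∫ s in c₁..x, 1 / g₁ s with hG_def
  have hcontinv : ContinuousOn (fun s => 1 / g₁ s) (Ioi (0:ℝ)) :=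
    ContinuousOn.div continuousOn_const (hg₁_cont.mono Ioi_subset_Ici_self)
      (fun x hx => (hg₁_pos x hx).ne')
  have hGderiv : ∀ x, c₁ ≤ x → HasDerivAt G (1 / g₁ x) x := by
    intro x hx
    have hxpos : (0:ℝ) < x := lt_of_lt_of_le hc₁ hx
    refine intervalIntegral.integral_hasDerivAt_right ?_ ?_ ?_
    · refine (hint.mono_set ?_).intervalIntegrable
      rw [uIcc_of_le hx]
      exact Icc_subset_Ici_self
    · exact hcontinv.stronglyMeasurableAtFilter isOpen_Ioi x hxpos
    · exact hcontinv.continuousAt (Ioi_mem_nhds hxpos)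
  -- h t = G (w t) grows at least linearly
  have hkey : ∀ t : ℝ, 0 ≤ t → HasDerivAt (fun u => G (w u)) (f₁ (z t)) t := by
    intro t ht
    have hwt : c₁ ≤ w t := hwge t ht
    have hwpos : (0:ℝ) < w t := lt_of_lt_of_le hc₁ hwt
    have hne : g₁ (w t) ≠ 0 := (hg₁_pos _ hwpos).ne'
    have := (hGderiv (w t) hwt).comp t (hderiv t ht).1
    rw [one_div, mul_comm (f₁ (z t)), inv_mul_cancel_left₀ hne] at this
    exact this
  have hlin : ∀ t : ℝ, 0 ≤ t → a * t ≤ G (w t) := by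
    intro t ht
    have hmono : MonotoneOn (fun u => G (w u) - a * u) (Ici (0:ℝ)) := by
      apply monotoneOn_of_deriv_nonneg (convex_Ici 0)
      · intro u hu
        exact (((hkey u hu).sub ((hasDerivAt_id u).const_mul a)).continuousAt).continuousWithinAt
      · intro u hu
        rw [interior_Ici] at hu
        exact (((hkey u hu.le).sub ((hasDerivAt_id u).const_mul a)).differentiableAt).differentiableWithinAt
      · intro u hu
        rw [interior_Ici] at hu
        have hd : HasDerivAt (fun u => G (w u) - a * u) (f₁ (z u) - a * 1) u := by
          simpa [id_eq, Pi.sub_def] using (hkey u hu.le).sub ((hasDerivAt_id u).const_mul a)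
        rw [hd.deriv]
        simp only [mul_one, sub_nonneg]
        exact hf₁_mono hc₂.le (le_trans hc₂.le (hzge u hu.le)) (hzge u hu.le)
    have := hmono (self_mem_Ici) (Set.mem_Ici.mpr ht) ht
    simp only [hw0, mul_zero, sub_zero] at this
    have hG0 : G c₁ = 0 := intervalIntegral.integral_same
    rw [hG0] at this
    linarith [this]
  -- upper bound on G
  set M : ℝ := ∫ s in Ici c₁, 1 / g₁ s with hM_def
  have hinvnn : ∀ s ∈ Ici c₁, 0 ≤ 1 / g₁ s := fun s hs =>
    (one_div_nonneg).mpr (hg₁0 s (le_trans hc₁.le hs))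
  have hMnn : 0 ≤ M := setIntegral_nonneg measurableSet_Ici hinvnn
  have hGle : ∀ x, c₁ ≤ x → G x ≤ M := by
    intro x hx
    rw [hG_def]
    simp only
    rw [intervalIntegral.integral_of_le hx]
    apply setIntegral_mono_set hint
    · filter_upwards [ae_restrict_mem measurableSet_Ici] with s hs using hinvnn s hs
    · exact HasSubset.Subset.eventuallyLE (fun s hs => hs.1.le)
  -- contradiction
  set t₀ : ℝ := (M + 1) / a with ht₀_def
  have ht₀nn : 0 ≤ t₀ := div_nonneg (by linarith) ha.le
  have h1 : a * t₀ ≤ G (w t₀) := hlin t₀ ht₀nn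
  have h2 : G (w t₀) ≤ M := hGle (w t₀) (hwge t₀ ht₀nn)
  have h3 : a * t₀ = M + 1 := by
    rw [ht₀_def, mul_comm, div_mul_cancel₀ _ ha.ne']
  linarith
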